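/- Farthest-point (greedy K-center) gives a 2-approximation: let P ⊆ ℝ^d be finite and let the greedy algorithm pick c₁ ∈ P arbitrarily and iteratively c_{i+1} = argmax_{p∈P} min_{j≤i} ‖p − c_j‖ for i < K. Then the resulting set C of K centers satisfies max_{p∈P} min_{c∈C} ‖p−c‖ ≤ 2·OPT, where OPT = min over all K-subsets (or K-point sets) C' ⊆ ℝ^d of max_{p∈P} min_{c∈C'} ‖p−c‖. -/
import Mathlib


/-- greedy farthest-point traversal is a 2-approximation for the
K-center problem. The greedy centers `c : Fin K → ℝ^d` all belong to `P`, and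
each `c i` maximizes, over `p ∈ P`, the minimum distance to previously chosen
centers. If some set of `K` centers `C'` covers `P` within radius `r` (in
particular the optimal one), then the greedy centers cover `P` within `2r`. -/
theorem greedy_kcenter_two_approx {d K : ℕ} (hK : 0 < K)
    (P : Finset (EuclideanSpace ℝ (Fin d))) (hP : P.Nonempty)
    (c : Fin K → EuclideanSpace ℝ (Fin d))
    (hcP : ∀ i, c i ∈ P)
    (hgreedy : ∀ i : Fin K, ∀ hi : (Finset.Iio i).Nonempty, ∀ p ∈ P,
      (Finset.Iio i).inf' hi (fun j => dist p (c j)) ≤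
      (Finset.Iio i).inf' hi (fun j => dist (c i) (c j)))
    (r : ℝ) (hr : 0 ≤ r)
    (C' : Fin K → EuclideanSpace ℝ (Fin d))
    (hopt : ∀ p ∈ P, ∃ j : Fin K, dist p (C' j) ≤ r) :
    ∀ p ∈ P, ∃ i : Fin K, dist p (c i) ≤ 2 * r := by
  intro p hp
  by_contra h
  push_neg at h
  have key : ∀ i j : Fin K, j < i → 2 * r < dist (c i) (c j) := by
    intro i j hji
    have hne : (Finset.Iio i).Nonempty := ⟨j, Finset.mem_Iio.mpr hji⟩
    have h1 := hgreedy i hne p hp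
    have h2 : 2 * r < (Finset.Iio i).inf' hne (fun j => dist p (c j)) := by
      rw [Finset.lt_inf'_iff]
      intro k _; exact h k
    calc 2 * r < _ := h2.trans_le h1
      _ ≤ dist (c i) (c j) := Finset.inf'_le _ (Finset.mem_Iio.mpr hji)
  let f : Option (Fin K) → EuclideanSpace ℝ (Fin d) := fun o => o.elim p c
  have hfP : ∀ o, f o ∈ P := fun o => by cases o <;> simp [f, hp, hcP]
  choose g hg using fun o => hopt (f o) (hfP o)
  have hcard : Fintype.card (Fin K) < Fintype.card (Option (Fin K)) := by simp
  obtain ⟨a, b, hab, hgab⟩ := Fintype.exists_ne_map_eq_of_card_lt g hcard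
  have hdist : dist (f a) (f b) ≤ 2 * r := by
    calc dist (f a) (f b) ≤ dist (f a) (C' (g a)) + dist (C' (g a)) (f b) :=
          dist_triangle _ _ _
      _ ≤ r + r := add_le_add (hg a) (by rw [hgab, dist_comm]; exact hg b)
      _ = 2 * r := by ring
  have hgt : 2 * r < dist (f a) (f b) := by
    match a, b with
    | none, none => exact absurd rfl hab
    | none, some i => simpa [f] using h i
    | some i, none => rw [dist_comm]; simpa [f] using h i
    | some i, some j =>
      have hij : i ≠ j := by simpa using hab
      rcases hij.lt_or_gt with hlt | hlt
      · rw [dist_comm]; exact key j i hlt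
      · exact key i j hlt
  exact absurd hdist (not_le.mpr hgt)
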